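/- Let n, k, r be integers with r > k ≥ 2 and n ≥ 2k. If H is a vertex-k-maximal r-uniform hypergraph on n vertices, then |E(H)| ≤ C(n, r) − C(n − k, r), where C(a, b) denotes the binomial coefficient (equal to 0 when b > a). -/

import Mathlib

/-- A finite hypergraph: a finite vertex set together with a finite set of
non-empty edges, each a subset of the vertex set. -/
structure FinHypergraph where
  verts : Finset ℕ
  edges : Finset (Finset ℕ)
  edge_sub : ∀ e ∈ edges, e ⊆ verts
  edge_nonempty : ∀ e ∈ edges, e.Nonempty

namespace FinHypergraph

/-- `H` is `r`-uniform if every edge has cardinality `r`. -/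
def IsUniform (H : FinHypergraph) (r : ℕ) : Prop := ∀ e ∈ H.edges, e.card = r

/-- `H'` is a subhypergraph of `H`. -/
def IsSub (H' H : FinHypergraph) : Prop := H'.verts ⊆ H.verts ∧ H'.edges ⊆ H.edges

/-- Two vertices are adjacent if some edge contains both. -/
def Adj (H : FinHypergraph) (u v : ℕ) : Prop := ∃ e ∈ H.edges, u ∈ e ∧ v ∈ e

/-- `H` is connected if every pair of vertices is joined by a path
(equivalently, a walk, i.e. is reachable via the adjacency relation). -/
def Connected (H : FinHypergraph) : Prop :=
  ∀ u ∈ H.verts, ∀ v ∈ H.verts, Relation.ReflTransGen H.Adj u v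

/-- The subhypergraph of `H` induced by the vertex set `Y`. -/
def induce (H : FinHypergraph) (Y : Finset ℕ) : FinHypergraph where
  verts := H.verts ∩ Y
  edges := H.edges.filter (fun e => e ⊆ Y)
  edge_sub := by
    intro e he
    simp only [Finset.mem_filter] at he
    exact Finset.subset_inter (H.edge_sub e he.1) he.2
  edge_nonempty := by
    intro e he
    simp only [Finset.mem_filter] at he
    exact H.edge_nonempty e he.1

/-- `X` is a vertex-cut of `H` if deleting `X` leaves a disconnected hypergraph. -/
def IsVertexCut (H : FinHypergraph) (X : Finset ℕ) : Prop :=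
  X ⊆ H.verts ∧ ¬ (H.induce (H.verts \ X)).Connected

open Classical in
/-- The vertex-connectivity of `H`: the minimum cardinality of a vertex-cut if one
exists, and `|V(H)| - 1` otherwise. -/
noncomputable def kappa (H : FinHypergraph) : ℕ :=
  if ∃ X, H.IsVertexCut X then sInf {m | ∃ X, H.IsVertexCut X ∧ X.card = m}
  else H.verts.card - 1

/-- `κ̄(H)`: the maximum vertex-connectivity over all subhypergraphs of `H`. -/
noncomputable def kappaBar (H : FinHypergraph) : ℕ :=
  sSup {m | ∃ H' : FinHypergraph, H'.IsSub H ∧ H'.kappa = m}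

/-- `H + e`: add the edge `e` (a non-empty subset of the vertices) to `H`. -/
def addEdge (H : FinHypergraph) (e : Finset ℕ) : FinHypergraph where
  verts := H.verts
  edges := if e ⊆ H.verts ∧ e.Nonempty then insert e H.edges else H.edges
  edge_sub := by
    intro f hf
    split at hf
    · rcases Finset.mem_insert.mp hf with rfl | hf
      · exact (by assumption : f ⊆ H.verts ∧ f.Nonempty).1
      · exact H.edge_sub f hf
    · exact H.edge_sub f hf
  edge_nonempty := by
    intro f hf
    split at hf
    · rcases Finset.mem_insert.mp hf with rfl | hf
      · exact (by assumption : f ⊆ H.verts ∧ f.Nonempty).2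
      · exact H.edge_nonempty f hf
    · exact H.edge_nonempty f hf

/-- `H + F`: add a set `F` of edges to `H`. -/
def addEdges (H : FinHypergraph) (F : Finset (Finset ℕ)) : FinHypergraph where
  verts := H.verts
  edges := H.edges ∪ F.filter (fun e => e ⊆ H.verts ∧ e.Nonempty)
  edge_sub := by
    intro f hf
    rcases Finset.mem_union.mp hf with hf | hf
    · exact H.edge_sub f hf
    · exact (Finset.mem_filter.mp hf).2.1
  edge_nonempty := by
    intro f hf
    rcases Finset.mem_union.mp hf with hf | hf
    · exact H.edge_nonempty f hf
    · exact (Finset.mem_filter.mp hf).2.2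

/-- `H` is vertex-`k`-maximal (as an `r`-uniform hypergraph): `κ̄(H) ≤ k`, but adding
any edge of the complement `H^c` creates a subhypergraph of connectivity at least `k + 1`. -/
def VertexKMaximal (H : FinHypergraph) (r k : ℕ) : Prop :=
  H.IsUniform r ∧ H.kappaBar ≤ k ∧
    ∀ e : Finset ℕ, e ⊆ H.verts → e.card = r → e ∉ H.edges →
      k + 1 ≤ (H.addEdge e).kappaBar

/-- The complete `r`-uniform hypergraph on the vertex set `V`. -/
def completeHG (V : Finset ℕ) (r : ℕ) : FinHypergraph where
  verts := V
  edges := (V.powersetCard r).filter (fun e => e.Nonempty)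
  edge_sub := by
    intro e he
    simp only [Finset.mem_filter, Finset.mem_powersetCard] at he
    exact he.1.1
  edge_nonempty := by
    intro e he
    exact (Finset.mem_filter.mp he).2

/-- The hypergraph on vertex set `V` with no edges. -/
def emptyHG (V : Finset ℕ) : FinHypergraph where
  verts := V
  edges := ∅
  edge_sub := by simp
  edge_nonempty := by simp

/-- The `r`-join `H₁ ∨_r H₂`: the union of `H₁` and `H₂` together with all
`r`-element subsets of `V(H₁) ∪ V(H₂)` meeting both `V(H₁)` and `V(H₂)`. -/
def rJoin (H1 H2 : FinHypergraph) (r : ℕ) : FinHypergraph where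
  verts := H1.verts ∪ H2.verts
  edges := H1.edges ∪ H2.edges ∪
    ((H1.verts ∪ H2.verts).powersetCard r).filter
      (fun e => (e ∩ H1.verts).Nonempty ∧ (e ∩ H2.verts).Nonempty)
  edge_sub := by
    intro e he
    rcases Finset.mem_union.mp he with he | he
    · rcases Finset.mem_union.mp he with he | he
      · exact (H1.edge_sub e he).trans Finset.subset_union_left
      · exact (H2.edge_sub e he).trans Finset.subset_union_right
    · exact (Finset.mem_powersetCard.mp (Finset.mem_filter.mp he).1).1
  edge_nonempty := by
    intro e he
    rcases Finset.mem_union.mp he with he | he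
    · rcases Finset.mem_union.mp he with he | he
      · exact H1.edge_nonempty e he
      · exact H2.edge_nonempty e he
    · obtain ⟨x, hx⟩ := (Finset.mem_filter.mp he).2.1
      exact ⟨x, (Finset.mem_inter.mp hx).1⟩

/-- The union of two hypergraphs. -/
def hUnion (H1 H2 : FinHypergraph) : FinHypergraph where
  verts := H1.verts ∪ H2.verts
  edges := H1.edges ∪ H2.edges
  edge_sub := by
    intro e he
    rcases Finset.mem_union.mp he with he | he
    · exact (H1.edge_sub e he).trans Finset.subset_union_left
    · exact (H2.edge_sub e he).trans Finset.subset_union_right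
  edge_nonempty := by
    intro e he
    rcases Finset.mem_union.mp he with he | he
    · exact H1.edge_nonempty e he
    · exact H2.edge_nonempty e he

/-- The union of the hypergraphs `f 0, …, f (m-1)`. -/
def unionOver (m : ℕ) (f : ℕ → FinHypergraph) : FinHypergraph where
  verts := (Finset.range m).biUnion (fun i => (f i).verts)
  edges := (Finset.range m).biUnion (fun i => (f i).edges)
  edge_sub := by
    intro e he
    obtain ⟨i, hi, hei⟩ := Finset.mem_biUnion.mp he
    exact ((f i).edge_sub e hei).trans (Finset.subset_biUnion_of_mem (fun i => (f i).verts) hi)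
  edge_nonempty := by
    intro e he
    obtain ⟨i, _, hei⟩ := Finset.mem_biUnion.mp he
    exact (f i).edge_nonempty e hei

/-- `C` is a component of `G`: a maximal connected subhypergraph. -/
def IsComponent (G C : FinHypergraph) : Prop :=
  C.IsSub G ∧ C.Connected ∧
    ∀ C' : FinHypergraph, C'.IsSub G → C'.Connected → C.IsSub C' → C' = C

/-- `(S, H₁, H₂)` is a separation triple of `H`: `S` is a minimum vertex-cut,
`H₁ = H[S ∪ V(C₁)]` and `H₂ = H[S ∪ V(C₂)]`, where `C₁` is a component of `H - S`
and `C₂ = H - (S ∪ V(C₁))`. -/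
def IsSeparationTriple (H : FinHypergraph) (S : Finset ℕ) (H1 H2 : FinHypergraph) : Prop :=
  H.IsVertexCut S ∧ (∀ X : Finset ℕ, H.IsVertexCut X → S.card ≤ X.card) ∧
    ∃ C1 : FinHypergraph, IsComponent (H.induce (H.verts \ S)) C1 ∧
      H1 = H.induce (S ∪ C1.verts) ∧
      H2 = H.induce (S ∪ (H.verts \ (S ∪ C1.verts)))

end FinHypergraph


lemma choose_superadd (q : ℕ) (hq : 1 ≤ q) (a b : ℕ) :
    a.choose q + b.choose q ≤ (a + b).choose q := by
  rcases lt_or_ge a q with h | ha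
  · rw [Nat.choose_eq_zero_of_lt h, zero_add]
    exact Nat.choose_le_choose q (Nat.le_add_left b a)
  rcases lt_or_ge b q with h | hb
  · rw [Nat.choose_eq_zero_of_lt h, add_zero]
    exact Nat.choose_le_choose q (Nat.le_add_right a b)
  rw [Nat.add_choose_eq]
  have hsub : ({(q,0),(0,q)} : Finset (ℕ×ℕ)) ⊆ Finset.HasAntidiagonal.antidiagonal q := by
    intro x hx
    rcases Finset.mem_insert.mp hx with rfl | hx
    · simp
    · rw [Finset.mem_singleton.mp hx]; simp
  have hne : ((q,0) : ℕ×ℕ) ≠ (0,q) := by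
    intro h; apply absurd (congrArg Prod.fst h); simpa using by omega
  calc a.choose q + b.choose q
      = ∑ ij ∈ ({(q,0),(0,q)} : Finset (ℕ×ℕ)), a.choose ij.1 * b.choose ij.2 := by
        rw [Finset.sum_pair hne]; simp
    _ ≤ ∑ ij ∈ Finset.HasAntidiagonal.antidiagonal q, a.choose ij.1 * b.choose ij.2 :=
        Finset.sum_le_sum_of_subset hsub

lemma pascal' (m r : ℕ) (hr : 2 ≤ r) :
    m.choose r = (m - 1).choose r + (m - 1).choose (r - 1) := by
  obtain ⟨r', rfl⟩ : ∃ r', r = r' + 1 := ⟨r - 1, by omega⟩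
  cases m with
  | zero =>
    have h1 : Nat.choose 0 (r' + 1) = 0 := Nat.choose_eq_zero_of_lt (by omega)
    have h2 : Nat.choose 0 r' = 0 := Nat.choose_eq_zero_of_lt (by omega)
    simp [h1, h2]
  | succ m => simp [Nat.choose_succ_succ m r', add_comm]

lemma arith_main (r : ℕ) (hr : 2 ≤ r) (a b t : ℕ) :
    (a + b - t).choose r + a.choose r + b.choose r ≤
      (a + b).choose r + (a - t).choose r + (b - t).choose r := by
  induction t with
  | zero => simp
  | succ t ih =>
    have e1 : (a + b - t).choose r
        = (a + b - (t+1)).choose r + (a + b - (t+1)).choose (r-1) := by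
      have := pascal' (a + b - t) r hr
      rwa [show a + b - t - 1 = a + b - (t+1) by omega] at this
    have e2 : (a - t).choose r = (a - (t+1)).choose r + (a - (t+1)).choose (r-1) := by
      have := pascal' (a - t) r hr
      rwa [show a - t - 1 = a - (t+1) by omega] at this
    have e3 : (b - t).choose r = (b - (t+1)).choose r + (b - (t+1)).choose (r-1) := by
      have := pascal' (b - t) r hr
      rwa [show b - t - 1 = b - (t+1) by omega] at this
    have hsup : (a - (t+1)).choose (r-1) + (b - (t+1)).choose (r-1)
        ≤ (a + b - (t+1)).choose (r-1) := by
      calc (a - (t+1)).choose (r-1) + (b - (t+1)).choose (r-1)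
          ≤ ((a - (t+1)) + (b - (t+1))).choose (r-1) :=
            choose_superadd (r-1) (by omega) _ _
        _ ≤ (a + b - (t+1)).choose (r-1) := Nat.choose_le_choose _ (by omega)
    rw [e1, e2, e3] at ih
    linarith

namespace FinHypergraph

lemma IsSub.rfl' (H : FinHypergraph) : H.IsSub H := ⟨subset_rfl, subset_rfl⟩

lemma IsSub.trans' {H1 H2 H3 : FinHypergraph} (h12 : H1.IsSub H2) (h23 : H2.IsSub H3) :
    H1.IsSub H3 := ⟨h12.1.trans h23.1, h12.2.trans h23.2⟩

lemma kappa_le_card (H : FinHypergraph) : H.kappa ≤ H.verts.card := by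
  unfold kappa
  split
  · next h =>
    obtain ⟨X, hX⟩ := h
    exact le_trans (Nat.sInf_le ⟨X, hX, rfl⟩) (Finset.card_le_card hX.1)
  · omega

lemma kappaBar_bdd (H : FinHypergraph) :
    BddAbove {m | ∃ H' : FinHypergraph, H'.IsSub H ∧ H'.kappa = m} := by
  refine ⟨H.verts.card, ?_⟩
  rintro m ⟨H', h', rfl⟩
  exact le_trans (kappa_le_card H') (Finset.card_le_card h'.1)

lemma kappa_le_kappaBar_of_sub {H' H : FinHypergraph} (h : H'.IsSub H) :
    H'.kappa ≤ H.kappaBar :=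
  le_csSup (kappaBar_bdd H) ⟨H', h, rfl⟩

lemma kappaBar_mono {H' H : FinHypergraph} (h : H'.IsSub H) : H'.kappaBar ≤ H.kappaBar := by
  refine csSup_le (s := {m | ∃ H'' : FinHypergraph, H''.IsSub H' ∧ H''.kappa = m})
    ⟨H'.kappa, ⟨H', IsSub.rfl' H', rfl⟩⟩ ?_
  rintro m ⟨H'', h'', rfl⟩
  exact kappa_le_kappaBar_of_sub (h''.trans' h)

lemma exists_sub_kappa_eq_kappaBar (H : FinHypergraph) :
    ∃ H' : FinHypergraph, H'.IsSub H ∧ H'.kappa = H.kappaBar :=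
  Nat.sSup_mem (s := {m | ∃ H' : FinHypergraph, H'.IsSub H ∧ H'.kappa = m})
    ⟨H.kappa, ⟨H, IsSub.rfl' H, rfl⟩⟩ (kappaBar_bdd H)

lemma connected_of_card_lt_kappa {H : FinHypergraph} {X : Finset ℕ}
    (hX : X ⊆ H.verts) (h : X.card < H.kappa) :
    (H.induce (H.verts \ X)).Connected := by
  by_contra hc
  have hcut : H.IsVertexCut X := ⟨hX, hc⟩
  have : H.kappa ≤ X.card := by
    unfold kappa
    rw [if_pos ⟨X, hcut⟩]
    exact Nat.sInf_le ⟨X, hcut, rfl⟩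
  omega

lemma reach_invariant {G : FinHypergraph} {P : ℕ → Prop}
    (hP : ∀ g ∈ G.edges, (∃ x ∈ g, P x) → ∀ y ∈ g, P y)
    {a b : ℕ} (h : Relation.ReflTransGen G.Adj a b) (ha : P a) : P b := by
  induction h with
  | refl => exact ha
  | tail _ hadj ih =>
    obtain ⟨g, hg, hb, hc⟩ := hadj
    exact hP g hg ⟨_, hb, ih⟩ _ hc

lemma exists_cut {H : FinHypergraph} {r : ℕ} (hu : H.IsUniform r) (hr : 3 ≤ r)
    (h2 : 2 ≤ H.verts.card) : ∃ X, H.IsVertexCut X := by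
  obtain ⟨a, ha, b, hb, hab⟩ := Finset.one_lt_card.mp (show 1 < H.verts.card by omega)
  refine ⟨H.verts \ {a, b}, Finset.sdiff_subset, ?_⟩
  intro hconn
  have hmem : ∀ x ∈ ({a, b} : Finset ℕ), x ∈ H.verts →
      x ∈ (H.induce (H.verts \ (H.verts \ {a, b}))).verts := by
    intro x hx hxV
    simp only [induce, Finset.mem_inter, Finset.mem_sdiff]
    exact ⟨hxV, hxV, fun h => h.2 hx⟩
  have hreach := hconn a (hmem a (Finset.mem_insert_self a {b}) ha) b (hmem b (Finset.mem_insert_of_mem (Finset.mem_singleton_self b)) hb)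
  have : a = b := by
    refine reach_invariant (P := fun x => x = b → False) ?_ hreach ?_ rfl |>.elim
    · intro g hg _ y _ _
      simp only [induce, Finset.mem_filter] at hg
      obtain ⟨hgE, hgsub⟩ := hg
      have hsub2 : g ⊆ ({a, b} : Finset ℕ) := by
        intro x hx
        have := hgsub hx
        simp only [Finset.mem_sdiff, not_and, not_not] at this
        exact this.2 this.1
      have : g.card ≤ 2 := le_trans (Finset.card_le_card hsub2)
        (le_trans (Finset.card_insert_le a {b}) (by rw [Finset.card_singleton]))
      rw [hu g hgE] at this
      omega
    · exact fun h => hab h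
  exact hab this

end FinHypergraph


namespace FinHypergraph

lemma sub_max (H : FinHypergraph) (k r : ℕ) (hkr : k < r)
    (hH : H.VertexKMaximal r k)
    (S W1 W2 : Finset ℕ) (hScard : S.card ≤ k)
    (hW : W1 ∪ W2 = H.verts \ S) (hdisj : Disjoint W1 W2)
    (hclass : ∀ g ∈ H.edges, g ⊆ H.verts \ S → g ⊆ W1 ∨ g ⊆ W2) :
    (H.induce (S ∪ W1)).VertexKMaximal r k := by
  classical
  have hsub1 : (H.induce (S ∪ W1)).IsSub H :=
    ⟨Finset.inter_subset_left, Finset.filter_subset _ _⟩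
  refine ⟨fun e he => hH.1 e (hsub1.2 he), le_trans (kappaBar_mono hsub1) hH.2.1, ?_⟩
  intro e heV1 hecard henot1
  have heV : e ⊆ H.verts := heV1.trans Finset.inter_subset_left
  have heSW : e ⊆ S ∪ W1 := heV1.trans Finset.inter_subset_right
  have henotH : e ∉ H.edges := fun h => henot1 (Finset.mem_filter.mpr ⟨h, heSW⟩)
  have hk1 : k + 1 ≤ (H.addEdge e).kappaBar := hH.2.2 e heV hecard henotH
  obtain ⟨H'', hsub'', hkap''⟩ := exists_sub_kappa_eq_kappaBar (H.addEdge e)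
  have hkap : k + 1 ≤ H''.kappa := by omega
  have hene : e.Nonempty := Finset.card_pos.mp (by omega)
  have haddedges : (H.addEdge e).edges = insert e H.edges := by
    simp [addEdge, heV, hene]
  have hvertsH'' : H''.verts ⊆ H.verts := hsub''.1
  have hedgesH'' : H''.edges ⊆ insert e H.edges := by
    have := hsub''.2; rwa [haddedges] at this
  have heH'' : e ∈ H''.edges := by
    by_contra hne
    have hsubH : H''.IsSub H := ⟨hvertsH'', fun g hg => by
      rcases Finset.mem_insert.mp (hedgesH'' hg) with rfl | h
      · exact absurd hg hne
      · exact h⟩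
    have := (kappa_le_kappaBar_of_sub hsubH).trans hH.2.1
    omega
  have heVerts'' : e ⊆ H''.verts := H''.edge_sub e heH''
  have hXcard : (S ∩ H''.verts).card ≤ k :=
    le_trans (Finset.card_le_card Finset.inter_subset_left) hScard
  have hconn : (H''.induce (H''.verts \ (S ∩ H''.verts))).Connected :=
    connected_of_card_lt_kappa Finset.inter_subset_right (by omega)
  obtain ⟨z, hze, hzS⟩ : ∃ z ∈ e, z ∉ S := by
    by_contra h
    push_neg at h
    have h1 : e.card ≤ S.card := Finset.card_le_card h
    omega
  have hzW1 : z ∈ W1 := by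
    rcases Finset.mem_union.mp (heSW hze) with h | h
    · exact absurd h hzS
    · exact h
  have hedgeclass : ∀ g ∈ (H''.induce (H''.verts \ (S ∩ H''.verts))).edges,
      g ⊆ W1 ∨ g ⊆ W2 := by
    intro g hg
    simp only [induce, Finset.mem_filter] at hg
    obtain ⟨hgE, hgsub⟩ := hg
    have hgS : ∀ a ∈ g, a ∉ S := by
      intro a ha haS
      have h1 := Finset.mem_sdiff.mp (hgsub ha)
      exact h1.2 (Finset.mem_inter.mpr ⟨haS, h1.1⟩)
    have hgVS : g ⊆ H.verts \ S := by
      intro a ha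
      have h1 := Finset.mem_sdiff.mp (hgsub ha)
      exact Finset.mem_sdiff.mpr ⟨hvertsH'' h1.1, hgS a ha⟩
    rcases Finset.mem_insert.mp (hedgesH'' hgE) with rfl | hgH
    · left
      intro a ha
      rcases Finset.mem_union.mp (heSW ha) with h | h
      · exact absurd h (hgS a ha)
      · exact h
    · exact hclass g hgH hgVS
  have hnoW2 : ∀ w ∈ H''.verts, w ∉ W2 := by
    intro w hw hwW2
    have hwVS : w ∈ H.verts \ S := by
      rw [← hW]; exact Finset.mem_union_right _ hwW2
    have hwS : w ∉ S := (Finset.mem_sdiff.mp hwVS).2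
    have hzmem : z ∈ (H''.induce (H''.verts \ (S ∩ H''.verts))).verts := by
      simp only [induce, Finset.mem_inter, Finset.mem_sdiff]
      exact ⟨heVerts'' hze, heVerts'' hze, fun h => hzS h.1⟩
    have hwmem : w ∈ (H''.induce (H''.verts \ (S ∩ H''.verts))).verts := by
      simp only [induce, Finset.mem_inter, Finset.mem_sdiff]
      exact ⟨hw, hw, fun h => hwS h.1⟩
    have hreach := hconn z hzmem w hwmem
    have hwW1 : w ∈ W1 := by
      refine reach_invariant (P := fun x => x ∈ W1) ?_ hreach hzW1
      rintro g hg ⟨x, hxg, hxW1⟩ y hyg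
      rcases hedgeclass g hg with h | h
      · exact h hyg
      · exact absurd (h hxg) (Finset.disjoint_left.mp hdisj hxW1)
    exact Finset.disjoint_left.mp hdisj hwW1 hwW2
  have hsubverts : H''.verts ⊆ S ∪ W1 := by
    intro x hx
    by_cases hxS : x ∈ S
    · exact Finset.mem_union_left _ hxS
    · have hxVS : x ∈ H.verts \ S := Finset.mem_sdiff.mpr ⟨hvertsH'' hx, hxS⟩
      rw [← hW] at hxVS
      rcases Finset.mem_union.mp hxVS with h | h
      · exact Finset.mem_union_right _ h
      · exact absurd h (hnoW2 x hx)
  have hfinaledges : ((H.induce (S ∪ W1)).addEdge e).edges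
      = insert e (H.induce (S ∪ W1)).edges := by
    simp [addEdge, heV1, hene]
  have hfinal : H''.IsSub ((H.induce (S ∪ W1)).addEdge e) := by
    constructor
    · intro x hx
      exact Finset.mem_inter.mpr ⟨hvertsH'' hx, hsubverts hx⟩
    · intro g hg
      rw [hfinaledges]
      rcases Finset.mem_insert.mp (hedgesH'' hg) with rfl | hgH
      · exact Finset.mem_insert_self _ _
      · refine Finset.mem_insert_of_mem (Finset.mem_filter.mpr ⟨hgH, ?_⟩)
        exact (H''.edge_sub g hg).trans hsubverts
  exact le_trans hkap (kappa_le_kappaBar_of_sub hfinal)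

end FinHypergraph


namespace FinHypergraph

lemma count_bound (H : FinHypergraph) (k r : ℕ) (hkr : k < r)
    (hr1 : 2 ≤ r)
    (huni : H.IsUniform r)
    (S V1 V2 : Finset ℕ) (hSsub : S ⊆ H.verts) (hsk : S.card ≤ k)
    (hunion : V1 ∪ V2 = H.verts \ S) (hdisj : Disjoint V1 V2)
    (hclass : ∀ g ∈ H.edges, g ⊆ H.verts \ S → g ⊆ V1 ∨ g ⊆ V2)
    (hB1 : (H.induce (S ∪ V1)).edges.card ≤
      (S.card + V1.card).choose r - (S.card + V1.card - k).choose r)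
    (hB2 : (H.induce (S ∪ V2)).edges.card ≤
      (S.card + V2.card).choose r - (S.card + V2.card - k).choose r) :
    H.edges.card ≤ H.verts.card.choose r - (H.verts.card - k).choose r := by
  classical
  have hV1sub : V1 ⊆ H.verts \ S := by
    rw [← hunion]; exact Finset.subset_union_left
  have hV2sub : V2 ⊆ H.verts \ S := by
    rw [← hunion]; exact Finset.subset_union_right
  have hSV1 : S ∪ V1 ⊆ H.verts :=
    Finset.union_subset hSsub (hV1sub.trans Finset.sdiff_subset)
  have hSV2 : S ∪ V2 ⊆ H.verts :=
    Finset.union_subset hSsub (hV2sub.trans Finset.sdiff_subset)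
  have hd1 : Disjoint S V1 := by
    rw [Finset.disjoint_left]
    intro x hxS hxV1
    exact (Finset.mem_sdiff.mp (hV1sub hxV1)).2 hxS
  have hd2 : Disjoint S V2 := by
    rw [Finset.disjoint_left]
    intro x hxS hxV2
    exact (Finset.mem_sdiff.mp (hV2sub hxV2)).2 hxS
  have hc1 : (S ∪ V1).card = S.card + V1.card := Finset.card_union_of_disjoint hd1
  have hc2 : (S ∪ V2).card = S.card + V2.card := Finset.card_union_of_disjoint hd2
  have hc12 : (V1 ∪ V2).card = V1.card + V2.card := Finset.card_union_of_disjoint hdisj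
  have hn : H.verts.card = S.card + (V1.card + V2.card) := by
    have h2 : S.card ≤ H.verts.card := Finset.card_le_card hSsub
    have h1 : (H.verts \ S).card = H.verts.card - S.card := Finset.card_sdiff_of_subset hSsub
    rw [← hunion, hc12] at h1
    omega
  -- key: no r-set is inside both S ∪ V1 and S ∪ V2
  have key : ∀ g : Finset ℕ, g.card = r → ¬(g ⊆ S ∪ V1 ∧ g ⊆ S ∪ V2) := by
    rintro g hgr ⟨h1, h2⟩
    have hgS : g ⊆ S := by
      intro x hx
      rcases Finset.mem_union.mp (h1 hx) with h | hx1
      · exact h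
      rcases Finset.mem_union.mp (h2 hx) with h | hx2
      · exact h
      · exact absurd hx2 (Finset.disjoint_left.mp hdisj hx1)
    have := Finset.card_le_card hgS
    omega
  set p1 : Finset ℕ → Prop := fun g => g ⊆ S ∪ V1 with hp1
  set p2 : Finset ℕ → Prop := fun g => g ⊆ S ∪ V2 with hp2
  -- edge partition
  have hA : H.edges.filter p1 = (H.induce (S ∪ V1)).edges := by
    ext g
    simp only [hp1, induce, Finset.mem_filter]
  have hBeq : (H.edges.filter fun g => ¬ p1 g).filter p2 = (H.induce (S ∪ V2)).edges := by
    rw [Finset.filter_filter]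
    ext g
    simp only [induce, Finset.mem_filter]
    constructor
    · rintro ⟨hg, _, h2⟩
      exact ⟨hg, h2⟩
    · rintro ⟨hg, h2⟩
      exact ⟨hg, fun h1 => key g (huni g hg) ⟨h1, h2⟩, h2⟩
  have hE : H.edges.card = (H.induce (S ∪ V1)).edges.card
      + (H.induce (S ∪ V2)).edges.card
      + ((H.edges.filter fun g => ¬ p1 g).filter fun g => ¬ p2 g).card := by
    have e1 := Finset.card_filter_add_card_filter_not
      (s := H.edges) (p := p1)
    have e2 := Finset.card_filter_add_card_filter_not
      (s := H.edges.filter fun g => ¬ p1 g) (p := p2)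
    rw [hA] at e1
    rw [hBeq] at e2
    omega
  -- powerset partition
  set P := H.verts.powersetCard r with hP
  have hPA : P.filter p1 = (S ∪ V1).powersetCard r := by
    ext g
    simp only [hP, hp1, Finset.mem_filter, Finset.mem_powersetCard]
    exact ⟨fun h => ⟨h.2, h.1.2⟩, fun h => ⟨⟨h.1.trans hSV1, h.2⟩, h.1⟩⟩
  have hPB : (P.filter fun g => ¬ p1 g).filter p2 = (S ∪ V2).powersetCard r := by
    rw [Finset.filter_filter]
    ext g
    simp only [hP, hp1, hp2, Finset.mem_filter, Finset.mem_powersetCard]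
    constructor
    · exact fun h => ⟨h.2.2, h.1.2⟩
    · intro h
      exact ⟨⟨h.1.trans hSV2, h.2⟩, fun h1 => key g h.2 ⟨h1, h.1⟩, h.1⟩
  set q3 : Finset ℕ → Prop := fun g => g ⊆ H.verts \ S with hq3
  set Q3 := ((P.filter fun g => ¬ p1 g).filter fun g => ¬ p2 g).filter q3 with hQ3
  set Q4 := ((P.filter fun g => ¬ p1 g).filter fun g => ¬ p2 g).filter fun g => ¬ q3 g
    with hQ4
  have hPsplit : H.verts.card.choose r = (S.card + V1.card).choose r
      + (S.card + V2.card).choose r + Q3.card + Q4.card := by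
    have e1 := Finset.card_filter_add_card_filter_not (s := P) (p := p1)
    have e2 := Finset.card_filter_add_card_filter_not
      (s := P.filter fun g => ¬ p1 g) (p := p2)
    have e3 := Finset.card_filter_add_card_filter_not
      (s := (P.filter fun g => ¬ p1 g).filter fun g => ¬ p2 g) (p := q3)
    rw [hPA] at e1
    rw [hPB] at e2
    rw [← hQ3, ← hQ4] at e3
    have c0 : P.card = H.verts.card.choose r := by
      rw [hP, Finset.card_powersetCard]
    have cA : ((S ∪ V1).powersetCard r).card = (S.card + V1.card).choose r := by
      rw [Finset.card_powersetCard, hc1]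
    have cB : ((S ∪ V2).powersetCard r).card = (S.card + V2.card).choose r := by
      rw [Finset.card_powersetCard, hc2]
    omega
  -- Q3 card
  set R := (V1 ∪ V2).powersetCard r with hR
  have hRsplit : (V1.card + V2.card).choose r
      = V1.card.choose r + V2.card.choose r + Q3.card := by
    have e1 := Finset.card_filter_add_card_filter_not
      (s := R) (p := fun g => g ⊆ V1)
    have e2 := Finset.card_filter_add_card_filter_not
      (s := R.filter fun g => ¬ g ⊆ V1) (p := fun g => g ⊆ V2)
    have hR1 : R.filter (fun g => g ⊆ V1) = V1.powersetCard r := by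
      ext g
      simp only [hR, Finset.mem_filter, Finset.mem_powersetCard]
      exact ⟨fun h => ⟨h.2, h.1.2⟩,
        fun h => ⟨⟨h.1.trans Finset.subset_union_left, h.2⟩, h.1⟩⟩
    have hR2 : (R.filter fun g => ¬ g ⊆ V1).filter (fun g => g ⊆ V2)
        = V2.powersetCard r := by
      rw [Finset.filter_filter]
      ext g
      simp only [hR, Finset.mem_filter, Finset.mem_powersetCard]
      constructor
      · exact fun h => ⟨h.2.2, h.1.2⟩
      · intro h
        refine ⟨⟨h.1.trans Finset.subset_union_right, h.2⟩, ?_, h.1⟩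
        intro h1
        have hge : g ⊆ (∅ : Finset ℕ) := by
          intro x hx
          exact absurd (h.1 hx) (Finset.disjoint_left.mp hdisj (h1 hx))
        have := Finset.card_le_card hge
        simp only [Finset.card_empty] at this
        omega
    have hR3 : (R.filter fun g => ¬ g ⊆ V1).filter (fun g => ¬ g ⊆ V2) = Q3 := by
      rw [Finset.filter_filter, hQ3, Finset.filter_filter, Finset.filter_filter]
      ext g
      simp only [hR, hP, hp1, hp2, hq3, Finset.mem_filter, Finset.mem_powersetCard]
      constructor
      · rintro ⟨⟨hg12, hgr⟩, hn1, hn2⟩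
        have hgVS : g ⊆ H.verts \ S := by rw [← hunion]; exact hg12
        refine ⟨⟨hgVS.trans Finset.sdiff_subset, hgr⟩, ?_, ?_, hgVS⟩
        · intro h1
          apply hn1
          intro x hx
          rcases Finset.mem_union.mp (h1 hx) with h | h
          · exact absurd h (Finset.mem_sdiff.mp (hgVS hx)).2
          · exact h
        · intro h2
          apply hn2
          intro x hx
          rcases Finset.mem_union.mp (h2 hx) with h | h
          · exact absurd h (Finset.mem_sdiff.mp (hgVS hx)).2
          · exact h
      · rintro ⟨⟨hgV, hgr⟩, hn1, hn2, hgVS⟩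
        refine ⟨⟨by rw [hunion]; exact hgVS, hgr⟩, ?_, ?_⟩
        · exact fun h => hn1 (h.trans Finset.subset_union_right)
        · exact fun h => hn2 (h.trans Finset.subset_union_right)
    rw [hR1] at e1
    rw [hR2, hR3] at e2
    have c0 : R.card = (V1.card + V2.card).choose r := by
      rw [hR, Finset.card_powersetCard, hc12]
    have c1 : (V1.powersetCard r).card = V1.card.choose r := Finset.card_powersetCard _ _
    have c2 : (V2.powersetCard r).card = V2.card.choose r := Finset.card_powersetCard _ _
    omega
  -- cross edges are inside Q4
  have hCr : ((H.edges.filter fun g => ¬ p1 g).filter fun g => ¬ p2 g) ⊆ Q4 := by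
    intro g hg
    simp only [Finset.mem_filter] at hg
    obtain ⟨⟨hgE, hgn1⟩, hgn2⟩ := hg
    rw [hQ4]
    simp only [hP, Finset.mem_filter, Finset.mem_powersetCard]
    refine ⟨⟨⟨⟨H.edge_sub g hgE, huni g hgE⟩, hgn1⟩, hgn2⟩, ?_⟩
    intro hgVS
    rcases hclass g hgE hgVS with h | h
    · exact hgn1 (h.trans Finset.subset_union_right)
    · exact hgn2 (h.trans Finset.subset_union_right)
  have hCrcard := Finset.card_le_card hCr
  -- additive versions of hB1, hB2
  have hmono1 : (S.card + V1.card - k).choose r ≤ (S.card + V1.card).choose r :=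
    Nat.choose_le_choose r (by omega)
  have hmono2 : (S.card + V2.card - k).choose r ≤ (S.card + V2.card).choose r :=
    Nat.choose_le_choose r (by omega)
  have hb1' : (H.induce (S ∪ V1)).edges.card + (V1.card - (k - S.card)).choose r
      ≤ (S.card + V1.card).choose r := by
    have e : S.card + V1.card - k = V1.card - (k - S.card) := by omega
    rw [e] at hB1 hmono1
    omega
  have hb2' : (H.induce (S ∪ V2)).edges.card + (V2.card - (k - S.card)).choose r
      ≤ (S.card + V2.card).choose r := by
    have e : S.card + V2.card - k = V2.card - (k - S.card) := by omega
    rw [e] at hB2 hmono2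
    omega
  have harith := _root_.arith_main r hr1 V1.card V2.card (k - S.card)
  have hgoal : H.verts.card - k = V1.card + V2.card - (k - S.card) := by omega
  rw [hgoal]
  apply Nat.le_sub_of_add_le
  linarith

end FinHypergraph


namespace FinHypergraph

lemma main_bound (k r : ℕ) (hk : 2 ≤ k) (hkr : k < r) :
    ∀ n : ℕ, ∀ H : FinHypergraph, H.verts.card = n → H.VertexKMaximal r k →
      H.edges.card ≤ n.choose r - (n - k).choose r := by
  intro n
  induction n using Nat.strong_induction_on with
  | _ n ih =>
  intro H hcard hH
  classical
  by_cases hsmall : n < k + r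
  · have hz : (n - k).choose r = 0 := Nat.choose_eq_zero_of_lt (by omega)
    rw [hz, Nat.sub_zero]
    have hsub : H.edges ⊆ H.verts.powersetCard r := by
      intro g hg
      exact Finset.mem_powersetCard.mpr ⟨H.edge_sub g hg, hH.1 g hg⟩
    calc H.edges.card ≤ (H.verts.powersetCard r).card := Finset.card_le_card hsub
      _ = n.choose r := by rw [Finset.card_powersetCard, hcard]
  · push_neg at hsmall
    have hr3 : 3 ≤ r := by omega
    have hcutex : ∃ X, H.IsVertexCut X := exists_cut hH.1 hr3 (by omega)
    obtain ⟨S, hScut, hScard⟩ : ∃ S, H.IsVertexCut S ∧ S.card = H.kappa := by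
      have hkdef : H.kappa = sInf {m | ∃ X, H.IsVertexCut X ∧ X.card = m} := by
        unfold kappa
        rw [if_pos hcutex]
      have hmem := Nat.sInf_mem (s := {m | ∃ X, H.IsVertexCut X ∧ X.card = m})
        (by obtain ⟨X, hX⟩ := hcutex; exact ⟨X.card, X, hX, rfl⟩)
      obtain ⟨S, hS1, hS2⟩ := hmem
      exact ⟨S, hS1, by rw [hS2, hkdef]⟩
    have hkk : H.kappa ≤ k := le_trans (kappa_le_kappaBar_of_sub (IsSub.rfl' H)) hH.2.1
    have hsk : S.card ≤ k := by omega
    have hSsub : S ⊆ H.verts := hScut.1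
    have hdis := hScut.2
    unfold Connected at hdis
    push_neg at hdis
    obtain ⟨u, hu, v, hv, hnr⟩ := hdis
    have hu' : u ∈ H.verts \ S := (Finset.mem_inter.mp hu).2
    have hv' : v ∈ H.verts \ S := (Finset.mem_inter.mp hv).2
    set V1 := (H.verts \ S).filter
      (fun x => Relation.ReflTransGen (H.induce (H.verts \ S)).Adj u x) with hV1def
    set V2 := (H.verts \ S) \ V1 with hV2def
    have hV1sub : V1 ⊆ H.verts \ S := Finset.filter_subset _ _
    have hV2sub : V2 ⊆ H.verts \ S := Finset.sdiff_subset
    have hunion : V1 ∪ V2 = H.verts \ S := Finset.union_sdiff_of_subset hV1sub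
    have hdisj : Disjoint V1 V2 := Finset.disjoint_sdiff
    have huV1 : u ∈ V1 := Finset.mem_filter.mpr ⟨hu', Relation.ReflTransGen.refl⟩
    have hvV2 : v ∈ V2 :=
      Finset.mem_sdiff.mpr ⟨hv', fun h => hnr (Finset.mem_filter.mp h).2⟩
    have hclass : ∀ g ∈ H.edges, g ⊆ H.verts \ S → g ⊆ V1 ∨ g ⊆ V2 := by
      intro g hg hsub
      by_cases hx : ∃ x ∈ g, x ∈ V1
      · left
        obtain ⟨x, hxg, hxV1⟩ := hx
        intro y hy
        have hreach := (Finset.mem_filter.mp hxV1).2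
        have hgG : g ∈ (H.induce (H.verts \ S)).edges := Finset.mem_filter.mpr ⟨hg, hsub⟩
        exact Finset.mem_filter.mpr ⟨hsub hy, hreach.tail ⟨g, hgG, hxg, hy⟩⟩
      · right
        push_neg at hx
        intro y hy
        exact Finset.mem_sdiff.mpr ⟨hsub hy, hx y hy⟩
    have hn1pos : 0 < V1.card := Finset.card_pos.mpr ⟨u, huV1⟩
    have hn2pos : 0 < V2.card := Finset.card_pos.mpr ⟨v, hvV2⟩
    have hd1 : Disjoint S V1 := by
      rw [Finset.disjoint_left]
      intro x hxS hxV1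
      exact (Finset.mem_sdiff.mp (hV1sub hxV1)).2 hxS
    have hd2 : Disjoint S V2 := by
      rw [Finset.disjoint_left]
      intro x hxS hxV2
      exact (Finset.mem_sdiff.mp (hV2sub hxV2)).2 hxS
    have hSV1 : S ∪ V1 ⊆ H.verts :=
      Finset.union_subset hSsub (hV1sub.trans Finset.sdiff_subset)
    have hSV2 : S ∪ V2 ⊆ H.verts :=
      Finset.union_subset hSsub (hV2sub.trans Finset.sdiff_subset)
    have hverts1 : (H.induce (S ∪ V1)).verts = S ∪ V1 := Finset.inter_eq_right.mpr hSV1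
    have hverts2 : (H.induce (S ∪ V2)).verts = S ∪ V2 := Finset.inter_eq_right.mpr hSV2
    have hcardV : n = S.card + V1.card + V2.card := by
      have h2 : S.card ≤ H.verts.card := Finset.card_le_card hSsub
      have h1 : (H.verts \ S).card = H.verts.card - S.card := Finset.card_sdiff_of_subset hSsub
      rw [← hunion, Finset.card_union_of_disjoint hdisj] at h1
      omega
    have hmax1 := sub_max H k r hkr hH S V1 V2 hsk hunion hdisj hclass
    have hmax2 := sub_max H k r hkr hH S V2 V1 hsk
      (by rw [Finset.union_comm]; exact hunion) hdisj.symm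
      (fun g hg hs => (hclass g hg hs).symm)
    have hB1 := ih (S.card + V1.card) (by omega) (H.induce (S ∪ V1))
      (by rw [hverts1, Finset.card_union_of_disjoint hd1]) hmax1
    have hB2 := ih (S.card + V2.card) (by omega) (H.induce (S ∪ V2))
      (by rw [hverts2, Finset.card_union_of_disjoint hd2]) hmax2
    have hfin := count_bound H k r hkr (by omega) hH.1 S V1 V2 hSsub hsk
      hunion hdisj hclass hB1 hB2
    rw [hcard] at hfin
    exact hfin

end FinHypergraph

/-- For `r > k ≥ 2` and `n ≥ 2k`, every vertex-`k`-maximal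
`r`-uniform hypergraph on `n` vertices has at most `C(n,r) - C(n-k,r)` edges. -/
theorem stmt_12 (n k r : ℕ) (hk : 2 ≤ k) (hkr : k < r) (hn : 2 * k ≤ n)
    (H : FinHypergraph) (hcard : H.verts.card = n) (hH : H.VertexKMaximal r k) :
    H.edges.card ≤ n.choose r - (n - k).choose r :=
  FinHypergraph.main_bound k r hk hkr n H hcard hH
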